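/- Let A be an m×m real symmetric matrix with eigenvalues λ₁, λ₂, ..., λ_m (counted with multiplicity) and let u be a unit eigenvector of A corresponding to λ₁. Let B be an n×n real symmetric matrix with eigenvalues μ₁, μ₂, ..., μ_n (counted with multiplicity) and let v be a unit eigenvector of B corresponding to μ₁. Then for any reals ρ, ρ₁₁, ρ₂₂, the (m+n)×(m+n) block matrix C = [[A + ρ₁₁ u uᵀ, ρ u vᵀ], [ρ v uᵀ, B + ρ₂₂ v vᵀ]] has eigenvalues λ₂, ..., λ_m, μ₂, ..., μ_n, γ₁, γ₂ (with multiplicity), where γ₁, γ₂ are the eigenvalues of the 2×2 matrix [[λ₁ + ρ₁₁, ρ], [ρ, μ₁ + ρ₂₂]]. -/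

import Mathlib

open Matrix Polynomial





lemma my_exists_P (k : ℕ) (u : Fin (k+1) → ℝ) (hu1 : ∑ i, u i ^ 2 = 1) :
    ∃ P : Matrix (Fin (k+1)) (Fin (k+1)) ℝ,
      Pᵀ * P = 1 ∧ Pᵀ *ᵥ u = Pi.single 0 1 ∧ P *ᵥ Pi.single 0 1 = u := by
  classical
  set u' : EuclideanSpace ℝ (Fin (k+1)) := (WithLp.equiv 2 _).symm u with hu'
  have hu'app : ∀ i, u' i = u i := fun i => rfl
  have hnorm : (inner (𝕜 := ℝ) u' u') = 1 := by
    simp only [PiLp.inner_apply, RCLike.inner_apply, conj_trivial, hu'app]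
    simpa [sq] using hu1
  have horth : Orthonormal ℝ (({0} : Set (Fin (k+1))).restrict
      (fun _ : Fin (k+1) => u')) := by
    rw [orthonormal_iff_ite]
    intro i j
    have : i = j := Subtype.ext (by
      have hi := i.2; have hj := j.2
      simp only [Set.mem_singleton_iff] at hi hj
      rw [hi, hj])
    simp [this, hnorm]
    exact Or.inl (show ‖u'‖ = 1 by rw [norm_eq_sqrt_real_inner, hnorm, Real.sqrt_one])
  obtain ⟨b, hb⟩ := Orthonormal.exists_orthonormalBasis_extension_of_card_eq
    (by simp) horth
  have hb0 : b 0 = u' := hb 0 rfl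
  have hbo := b.orthonormal
  rw [orthonormal_iff_ite] at hbo
  refine ⟨Matrix.of (fun i j => b j i), ?_, ?_, ?_⟩
  · ext j l
    have := hbo j l
    simp only [PiLp.inner_apply, RCLike.inner_apply, conj_trivial] at this
    simp only [Matrix.mul_apply, Matrix.transpose_apply, Matrix.of_apply, Matrix.one_apply]
    simpa [mul_comm] using this
  · ext j
    have := hbo j 0
    rw [hb0] at this
    simp only [PiLp.inner_apply, RCLike.inner_apply, conj_trivial] at this
    simp only [Matrix.mulVec, Matrix.transpose_apply, Matrix.of_apply, dotProduct]
    simp only [hu'app] at this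
    rw [show ∑ i, (b j).ofLp i * u i = ∑ x, u x * (b j).ofLp x from
      Finset.sum_congr rfl fun _ _ => mul_comm _ _, this]
    simp [Pi.single_apply, eq_comm]
  · ext i
    simp only [Matrix.mulVec, Matrix.of_apply, dotProduct]
    rw [Finset.sum_eq_single 0]
    · rw [hb0]; simp [hu'app]
    · intro j _ hj; simp [Pi.single_apply, hj]
    · simp


def finEquiv (k : ℕ) : Fin (k+1) ≃ Unit ⊕ Fin k where
  toFun := fun i => Fin.cases (Sum.inl ()) (fun j => Sum.inr j) i
  invFun := Sum.elim (fun _ => 0) Fin.succ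
  left_inv := by intro i; induction i using Fin.cases <;> simp
  right_inv := by rintro (⟨⟩|j) <;> simp

example (k : ℕ) (M : Matrix (Fin (k+1)) (Fin (k+1)) ℝ) (l0 : ℝ)
    (h00 : M 0 0 = l0) (hc : ∀ i : Fin k, M i.succ 0 = 0) (hr : ∀ j : Fin k, M 0 j.succ = 0) :
    M.charpoly = (X - C l0) * (M.submatrix Fin.succ Fin.succ).charpoly := by
  have h1 : reindex (finEquiv k) (finEquiv k) M =
      fromBlocks (Matrix.of (fun _ _ => l0)) 0 0 (M.submatrix Fin.succ Fin.succ) := by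
    ext (i|i) (j|j) <;>
      simp [finEquiv, fromBlocks, h00, hc, hr]
  have h2 := charpoly_reindex (finEquiv k) M
  rw [h1] at h2
  rw [← h2, charpoly_fromBlocks_zero₂₁]
  congr 1
  rw [Matrix.charpoly, Matrix.det_unique]
  simp


lemma my_charpoly_conj {k : Type*} [Fintype k] [DecidableEq k]
    (U M : Matrix k k ℝ) (hU : Uᵀ * U = 1) :
    (Uᵀ * M * U).charpoly = M.charpoly := by
  have h1 : (Uᵀ.map (C : ℝ →+* ℝ[X])) * (U.map C) = 1 := by
    rw [← Matrix.map_mul, hU]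
    simp
  have h2 : charmatrix (Uᵀ * M * U) = Uᵀ.map C * charmatrix M * U.map C := by
    rw [charmatrix, charmatrix]
    rw [Matrix.mul_sub, Matrix.sub_mul]
    congr 1
    · rw [Matrix.mul_assoc, scalar_commute (X : ℝ[X]) (Commute.all X) (U.map C), ← Matrix.mul_assoc, h1, Matrix.one_mul]
    · simp only [RingHom.mapMatrix_apply, Matrix.map_mul]
  rw [Matrix.charpoly, h2, Matrix.det_mul, Matrix.det_mul, Matrix.charpoly]
  have h3 : (Uᵀ.map (C : ℝ →+* ℝ[X])).det * (U.map C).det = 1 := by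
    rw [← Matrix.det_mul, h1, Matrix.det_one]
  calc (Uᵀ.map (C : ℝ →+* ℝ[X])).det * (charmatrix M).det * (U.map C).det
      = (Uᵀ.map (C : ℝ →+* ℝ[X])).det * (U.map C).det * (charmatrix M).det := by ring
    _ = (charmatrix M).det := by rw [h3, one_mul]

lemma my_split (k : ℕ) (A : Matrix (Fin (k+1)) (Fin (k+1)) ℝ) (hA : A.IsSymm)
    (l0 : ℝ) (u : Fin (k+1) → ℝ) (hu : A.mulVec u = l0 • u) (hu1 : ∑ i, u i ^ 2 = 1) :
    ∃ P : Matrix (Fin (k+1)) (Fin (k+1)) ℝ,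
      Pᵀ * P = 1 ∧ Pᵀ *ᵥ u = Pi.single 0 1 ∧
      (Pᵀ * A * P) 0 0 = l0 ∧
      (∀ i : Fin k, (Pᵀ * A * P) i.succ 0 = 0) ∧
      (∀ j : Fin k, (Pᵀ * A * P) 0 j.succ = 0) ∧
      A.charpoly = (X - C l0) * ((Pᵀ * A * P).submatrix Fin.succ Fin.succ).charpoly := by
  obtain ⟨P, hP, hPu, hPe⟩ := my_exists_P k u hu1
  set M := Pᵀ * A * P with hM
  have hMsym : Mᵀ = M := by
    rw [hM, Matrix.transpose_mul, Matrix.transpose_mul, Matrix.transpose_transpose, hA.eq,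
      Matrix.mul_assoc]
  have hMe : M *ᵥ Pi.single 0 1 = l0 • (Pi.single 0 1 : Fin (k+1) → ℝ) := by
    rw [hM, ← Matrix.mulVec_mulVec, ← Matrix.mulVec_mulVec, hPe, hu, Matrix.mulVec_smul, hPu]
  have hcol : ∀ i, M i 0 = if i = 0 then l0 else 0 := by
    intro i
    have h := congrFun hMe i
    simp only [Matrix.mulVec, dotProduct, Pi.smul_apply, smul_eq_mul] at h
    rw [Finset.sum_eq_single 0 (by intro j _ hj; simp [Pi.single_apply, hj])
      (by simp)] at h
    simpa [Pi.single_apply, eq_comm, mul_comm] using h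
  have h00 : M 0 0 = l0 := by rw [hcol]; simp
  have hc : ∀ i : Fin k, M i.succ 0 = 0 := by
    intro i; rw [hcol]; simp [Fin.succ_ne_zero]
  have hr : ∀ j : Fin k, M 0 j.succ = 0 := by
    intro j
    have := congrFun (congrFun hMsym 0) j.succ
    rw [Matrix.transpose_apply] at this
    rw [← this, hc]
  refine ⟨P, hP, hPu, h00, hc, hr, ?_⟩
  have hchar : A.charpoly = M.charpoly := (my_charpoly_conj P A hP).symm
  rw [hchar]
  -- block decomposition
  have h1 : reindex (finEquiv k) (finEquiv k) M =
      fromBlocks (Matrix.of (fun _ _ => l0)) 0 0 (M.submatrix Fin.succ Fin.succ) := by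
    ext (i|i) (j|j) <;>
      simp [finEquiv, fromBlocks, h00, hc, hr]
  have h2 := charpoly_reindex (finEquiv k) M
  rw [h1] at h2
  rw [← h2, charpoly_fromBlocks_zero₂₁]
  congr 1
  rw [Matrix.charpoly, Matrix.det_unique]
  simp


lemma conj_vecMulVec {a b : Type*} [Fintype a] [Fintype b] [DecidableEq a] [DecidableEq b]
    (P : Matrix a a ℝ) (Q : Matrix b b ℝ) (u : a → ℝ) (w : b → ℝ) :
    Pᵀ * vecMulVec u w * Q = vecMulVec (Pᵀ *ᵥ u) (Qᵀ *ᵥ w) := by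
  ext i j
  simp only [Matrix.mul_apply, vecMulVec_apply, Matrix.mulVec, dotProduct,
    Matrix.transpose_apply, Finset.sum_mul, Finset.mul_sum]
  apply Finset.sum_congr rfl
  intro x _
  apply Finset.sum_congr rfl
  intro y _
  ring

def bigEquiv (m n : ℕ) : (Fin (m+1) ⊕ Fin (n+1)) ≃ (Fin 2 ⊕ (Fin m ⊕ Fin n)) where
  toFun := Sum.elim (fun i => Fin.cases (Sum.inl 0) (fun i' => Sum.inr (Sum.inl i')) i)
    (fun j => Fin.cases (Sum.inl 1) (fun j' => Sum.inr (Sum.inr j')) j)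
  invFun := Sum.elim (![Sum.inl 0, Sum.inr 0])
    (Sum.elim (fun i => Sum.inl i.succ) (fun j => Sum.inr j.succ))
  left_inv := by
    rintro (i|j)
    · induction i using Fin.cases <;> simp
    · induction j using Fin.cases <;> simp
  right_inv := by
    rintro (t|(i|j))
    · fin_cases t <;> simp
    · simp
    · simp

lemma fin_val_map {k : ℕ} (f : Fin (k+1) → ℝ) :
    (Finset.univ.val.map f : Multiset ℝ)
      = f 0 ::ₘ (Finset.univ.val.map (fun i : Fin k => f i.succ)) := by
  rw [Fin.univ_succ, Finset.cons_val, Multiset.map_cons, Finset.map_val, Multiset.map_map]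
  rfl

/-- Generalized Fiedler lemma with diagonal perturbations `ρ₁₁ u uᵀ`, `ρ₂₂ v vᵀ`. -/
theorem stmt_6 (m n : ℕ)
    (A : Matrix (Fin (m + 1)) (Fin (m + 1)) ℝ) (hA : A.IsSymm)
    (B : Matrix (Fin (n + 1)) (Fin (n + 1)) ℝ) (hB : B.IsSymm)
    (lam : Fin (m + 1) → ℝ) (mu : Fin (n + 1) → ℝ)
    (hAspec : A.charpoly.roots = Finset.univ.val.map lam)
    (hBspec : B.charpoly.roots = Finset.univ.val.map mu)
    (u : Fin (m + 1) → ℝ) (v : Fin (n + 1) → ℝ)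
    (hu : A.mulVec u = lam 0 • u) (hv : B.mulVec v = mu 0 • v)
    (hu1 : ∑ i, u i ^ 2 = 1) (hv1 : ∑ i, v i ^ 2 = 1)
    (ρ ρ₁₁ ρ₂₂ : ℝ) :
    (fromBlocks (A + ρ₁₁ • vecMulVec u u) (ρ • vecMulVec u v)
        (ρ • vecMulVec v u) (B + ρ₂₂ • vecMulVec v v)).charpoly.roots
      = Finset.univ.val.map (fun i : Fin m => lam i.succ)
        + Finset.univ.val.map (fun i : Fin n => mu i.succ)
        + (!![lam 0 + ρ₁₁, ρ; ρ, mu 0 + ρ₂₂] : Matrix (Fin 2) (Fin 2) ℝ).charpoly.roots := by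
  classical
  obtain ⟨P, hP, hPu, hA00, hAc, hAr, hAchar⟩ := my_split m A hA (lam 0) u hu hu1
  obtain ⟨Q, hQ, hQv, hB00, hBc, hBr, hBchar⟩ := my_split n B hB (mu 0) v hv hv1
  set MA := Pᵀ * A * P with hMA
  set MB := Qᵀ * B * Q with hMB
  set A₁ := MA.submatrix Fin.succ Fin.succ with hA₁
  set B₁ := MB.submatrix Fin.succ Fin.succ with hB₁
  set CC := fromBlocks (A + ρ₁₁ • vecMulVec u u) (ρ • vecMulVec u v)
      (ρ • vecMulVec v u) (B + ρ₂₂ • vecMulVec v v) with hCC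
  set U := fromBlocks P 0 0 Q with hU
  have hUo : Uᵀ * U = 1 := by
    rw [hU, fromBlocks_transpose, fromBlocks_multiply]
    simp [hP, hQ, ← fromBlocks_one]
  -- compute the conjugated matrix
  have hN : Uᵀ * CC * U = fromBlocks
      (MA + ρ₁₁ • vecMulVec (Pi.single 0 1) (Pi.single 0 1))
      (ρ • vecMulVec (Pi.single 0 1) (Pi.single 0 1))
      (ρ • vecMulVec (Pi.single 0 1) (Pi.single 0 1))
      (MB + ρ₂₂ • vecMulVec (Pi.single 0 1) (Pi.single 0 1)) := by
    rw [hU, hCC, fromBlocks_transpose, fromBlocks_multiply, fromBlocks_multiply]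
    simp only [Matrix.transpose_zero, Matrix.zero_mul, Matrix.mul_zero, smul_zero,
      Matrix.mul_add, Matrix.add_mul, Matrix.mul_smul, Matrix.smul_mul,
      add_zero, zero_add, ← Matrix.mul_assoc, conj_vecMulVec, hPu, hQv, ← hMA, ← hMB]
  have hreidx : reindex (bigEquiv m n) (bigEquiv m n) (Uᵀ * CC * U)
      = fromBlocks (!![lam 0 + ρ₁₁, ρ; ρ, mu 0 + ρ₂₂]) 0 0 (fromBlocks A₁ 0 0 B₁) := by
    rw [hN]
    ext (t|(i|j)) (s|(i'|j'))
    · fin_cases t <;> fin_cases s <;>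
        simp [bigEquiv, fromBlocks, hA00, hB00, vecMulVec_apply, Pi.single_apply]
    · fin_cases t <;>
        simp [bigEquiv, fromBlocks, hAr, hBr, vecMulVec_apply, Pi.single_apply, hA₁, hB₁, Matrix.submatrix_apply, Fin.succ_ne_zero]
    · fin_cases t <;>
        simp [bigEquiv, fromBlocks, hAr, hBr, vecMulVec_apply, Pi.single_apply, hA₁, hB₁, Matrix.submatrix_apply, Fin.succ_ne_zero]
    · fin_cases s <;>
        simp [bigEquiv, fromBlocks, hAc, hBc, vecMulVec_apply, Pi.single_apply, hA₁, hB₁, Matrix.submatrix_apply, Fin.succ_ne_zero]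
    · simp [bigEquiv, fromBlocks, vecMulVec_apply, Pi.single_apply, hA₁, hB₁, Matrix.submatrix_apply, Fin.succ_ne_zero]
    · simp [bigEquiv, fromBlocks, vecMulVec_apply, Pi.single_apply, hA₁, hB₁, Matrix.submatrix_apply, Fin.succ_ne_zero]
    · fin_cases s <;>
        simp [bigEquiv, fromBlocks, hAc, hBc, vecMulVec_apply, Pi.single_apply, hA₁, hB₁, Matrix.submatrix_apply, Fin.succ_ne_zero]
    · simp [bigEquiv, fromBlocks, vecMulVec_apply, Pi.single_apply, hA₁, hB₁, Matrix.submatrix_apply, Fin.succ_ne_zero]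
    · simp [bigEquiv, fromBlocks, vecMulVec_apply, Pi.single_apply, hA₁, hB₁, Matrix.submatrix_apply, Fin.succ_ne_zero]
  -- charpoly factorization
  have hfact : CC.charpoly
      = (!![lam 0 + ρ₁₁, ρ; ρ, mu 0 + ρ₂₂] : Matrix (Fin 2) (Fin 2) ℝ).charpoly
        * (A₁.charpoly * B₁.charpoly) := by
    rw [← my_charpoly_conj U CC hUo, ← charpoly_reindex (bigEquiv m n), hreidx,
      charpoly_fromBlocks_zero₂₁, charpoly_fromBlocks_zero₂₁]
  -- roots of A₁ and B₁
  have hrootsA : A₁.charpoly.roots = Finset.univ.val.map (fun i : Fin m => lam i.succ) := by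
    have h1 : A.charpoly.roots = lam 0 ::ₘ A₁.charpoly.roots := by
      rw [hAchar, Polynomial.roots_mul (mul_ne_zero (Polynomial.X_sub_C_ne_zero _)
        (A₁.charpoly_monic.ne_zero)), Polynomial.roots_X_sub_C, Multiset.singleton_add]
    rw [hAspec, fin_val_map lam] at h1
    exact (Multiset.cons_inj_right _).mp h1.symm
  have hrootsB : B₁.charpoly.roots = Finset.univ.val.map (fun i : Fin n => mu i.succ) := by
    have h1 : B.charpoly.roots = mu 0 ::ₘ B₁.charpoly.roots := by
      rw [hBchar, Polynomial.roots_mul (mul_ne_zero (Polynomial.X_sub_C_ne_zero _)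
        (B₁.charpoly_monic.ne_zero)), Polynomial.roots_X_sub_C, Multiset.singleton_add]
    rw [hBspec, fin_val_map mu] at h1
    exact (Multiset.cons_inj_right _).mp h1.symm
  rw [hfact, Polynomial.roots_mul (mul_ne_zero (Matrix.charpoly_monic _).ne_zero
    (mul_ne_zero (Matrix.charpoly_monic _).ne_zero (Matrix.charpoly_monic _).ne_zero)),
    Polynomial.roots_mul (mul_ne_zero (Matrix.charpoly_monic _).ne_zero
    (Matrix.charpoly_monic _).ne_zero), hrootsA, hrootsB]
  ring_nf
  rw [add_comm]
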